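/- Let k > 1 with 2k + 2 not a power of 2. Then there exists i with 0 < i ≤ k such that C(2k+1, 2i) − C(2k+1, 2i−1) is odd. -/

import Mathlib

lemma odd_choose_two_pow_mul (v m : ℕ) (hm : Odd m) :
    Odd ((2 ^ v * m).choose (2 ^ v)) := by
  haveI : Fact (Nat.Prime 2) := ⟨Nat.prime_two⟩
  induction v with
  | zero => simpa using hm
  | succ v ih =>
    have h := @Choose.choose_modEq_choose_mod_mul_choose_div_nat (2 ^ (v+1) * m) (2 ^ (v+1)) 2 _
    have hn : (2 ^ (v+1) * m) % 2 = 0 := by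
      simp [Nat.mul_mod, Nat.pow_mod, Nat.pow_succ]
    have hk : (2 ^ (v+1)) % 2 = 0 := by
      simp [Nat.pow_mod, Nat.pow_succ]
    have hn2 : (2 ^ (v+1) * m) / 2 = 2 ^ v * m := by
      rw [pow_succ, mul_comm (2^v) 2, mul_assoc, Nat.mul_div_cancel_left _ (by norm_num)]
    have hk2 : (2 ^ (v+1)) / 2 = 2 ^ v := by
      rw [pow_succ, Nat.mul_div_cancel _ (by norm_num)]
    rw [hn, hk, hn2, hk2] at h
    simp only [Nat.choose_self, one_mul] at h
    rw [Nat.odd_iff]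
    rw [Nat.odd_iff] at ih
    rw [Nat.ModEq] at h
    omega

theorem exists_odd_choose_diff (k : ℕ) (hk : 1 < k) (h : ¬ ∃ s : ℕ, 2 * k + 2 = 2 ^ s) :
    ∃ i : ℕ, 0 < i ∧ i ≤ k ∧
      Odd (((2 * k + 1).choose (2 * i) : ℤ) - (2 * k + 1).choose (2 * i - 1)) := by
  set n := 2 * k + 2 with hn
  have hn0 : n ≠ 0 := by omega
  set v := n.factorization 2 with hv
  set m := n / 2 ^ v with hm
  have hmul : 2 ^ v * m = n := Nat.ordProj_mul_ordCompl_eq_self n 2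
  have hmodd : Odd m := by
    rw [Nat.odd_iff, ← Nat.two_dvd_ne_zero]
    exact Nat.not_dvd_ordCompl Nat.prime_two hn0
  have hv1 : 1 ≤ v := by
    have : 2 ∣ n := ⟨k + 1, by omega⟩
    exact (Nat.Prime.pow_dvd_iff_le_factorization Nat.prime_two hn0).mp (by simpa using this)
  have hm1 : 1 < m := by
    rcases Nat.lt_or_ge m 2 with hlt | hge
    · interval_cases m
      · omega
      · exact absurd ⟨v, by omega⟩ h
    · omega
  -- take 2i = 2^v
  refine ⟨2 ^ (v - 1), Nat.pow_pos (by norm_num), ?_, ?_⟩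
  · -- 2^(v-1) ≤ k : 2 * 2^(v-1) = 2^v ≤ 2^v * m / 3... need 2^v < n
    have h1 : 2 ^ v * 2 ≤ 2 ^ v * m := Nat.mul_le_mul_left _ hm1
    have h2 : 2 * 2 ^ (v - 1) = 2 ^ v := by
      rw [← pow_succ']; congr 1; omega
    -- 2^v * 2 ≤ n = 2k+2, and 2^v even... need strict: m odd >1 so m ≥ 3
    have hm3 : 3 ≤ m := by
      rcases hmodd with ⟨t, ht⟩; omega
    have h3 : 2 ^ v * 3 ≤ 2 ^ v * m := Nat.mul_le_mul_left _ hm3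
    have h4 : 2 ^ v ≥ 2 := by calc 2 = 2^1 := by norm_num
                                   _ ≤ 2 ^ v := Nat.pow_le_pow_right (by norm_num) hv1
    omega
  · set i := 2 ^ (v - 1) with hi
    have h2i : 2 * i = 2 ^ v := by rw [hi, ← pow_succ']; congr 1; omega
    have hodd : Odd (n.choose (2 * i)) := by
      rw [h2i, ← hmul]; exact odd_choose_two_pow_mul v m hmodd
    have hpascal : n.choose (2 * i) = (2 * k + 1).choose (2 * i - 1) + (2 * k + 1).choose (2 * i) := by
      have h2i1 : 2 * i = (2 * i - 1) + 1 := by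
        have : 1 ≤ i := Nat.one_le_two_pow
        omega
      rw [hn, show 2 * k + 2 = (2 * k + 1) + 1 from rfl, h2i1, Nat.choose_succ_succ]
      congr 1
    rw [hpascal] at hodd
    set A := (2 * k + 1).choose (2 * i) with hA
    set B := (2 * k + 1).choose (2 * i - 1) with hB
    rw [Int.odd_sub]
    simp only [Int.odd_coe_nat, Int.even_coe_nat]
    rw [Nat.odd_add] at hodd
    rw [Nat.odd_iff, Nat.even_iff] at hodd ⊢
    omega
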